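/- The graph G contains infinitely many pairwise vertex-disjoint I-minors. -/
import Mathlib


open SimpleGraph

/-- A model (inflated copy) of `X` in `G`: pairwise disjoint nonempty connected branch
sets `B v`, one for each vertex `v` of `X`, such that for every edge `v w` of `X` there is
an edge of `G` between `B v` and `B w`. -/
structure IsMinorModel {α β : Type*} (X : SimpleGraph α) (G : SimpleGraph β)
    (B : α → Set β) : Prop where
  nonempty : ∀ v, (B v).Nonempty
  connected : ∀ v, (G.induce (B v)).Connected
  pairwise_disjoint : ∀ ⦃v w⦄, v ≠ w → Disjoint (B v) (B w)
  adj : ∀ ⦃v w⦄, X.Adj v w → ∃ x ∈ B v, ∃ y ∈ B w, G.Adj x y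

/-- An `ι`-indexed family of pairwise vertex-disjoint models of `X` in `G`. -/
def DisjointModels {α β ι : Type*} (X : SimpleGraph α) (G : SimpleGraph β)
    (B : ι → α → Set β) : Prop :=
  (∀ k, IsMinorModel X G (B k)) ∧
    ∀ ⦃k l⦄, k ≠ l → Disjoint (⋃ v, B k v) (⋃ v, B l v)

/-- `X` is ubiquitous (w.r.t. the minor relation): every graph containing `n` pairwise
vertex-disjoint `X`-minors for every `n` contains infinitely many pairwise
vertex-disjoint `X`-minors. -/
def Ubiquitous {α : Type*} (X : SimpleGraph α) : Prop :=
  ∀ ⦃β : Type⦄ (G : SimpleGraph β),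
    (∀ n : ℕ, ∃ B : Fin n → α → Set β, DisjointModels X G B) →
    ∃ B : ℕ → α → Set β, DisjointModels X G B

/-- The ray: the one-way infinite path on `ℕ`. -/
def Ray : SimpleGraph ℕ := SimpleGraph.fromRel (fun n m => m = n + 1)

/-- The complete graph `K₅`. -/
abbrev K5 : SimpleGraph (Fin 5) := ⊤

/-- The complete bipartite graph `K₃,₃`. -/
abbrev K33 : SimpleGraph (Fin 3 ⊕ Fin 3) := completeBipartiteGraph (Fin 3) (Fin 3)

/-- Vertices of the 1-sum `I` of `K₅` and `K₃,₃`: the five vertices of `K₅` (with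
`Sum.inl 0` the identified vertex, which is also a vertex of the left side of `K₃,₃`),
plus the two remaining left-side vertices and the three right-side vertices of `K₃,₃`. -/
abbrev IV : Type := Fin 5 ⊕ (Fin 2 ⊕ Fin 3)

def IRel : IV → IV → Prop
  | Sum.inl _, Sum.inl _ => True
  | Sum.inl i, Sum.inr (Sum.inr _) => i = 0
  | Sum.inr (Sum.inl _), Sum.inr (Sum.inr _) => True
  | _, _ => False

/-- The graph `I`: the 1-sum of `K₅` and `K₃,₃`, identifying one vertex of each. -/
def GraphI : SimpleGraph IV := SimpleGraph.fromRel IRel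

/-- The graph `H`: the disjoint union of `I` and a ray. -/
def GraphH : SimpleGraph (IV ⊕ ℕ) := GraphI ⊕g Ray

def GridRel (p q : ℤ × ℕ) : Prop :=
  (q.1 = p.1 + 1 ∧ q.2 = p.2) ∨ (q.1 = p.1 ∧ q.2 = p.2 + 1)

/-- The half-grid on `ℤ × ℕ`: vertices adjacent iff they differ by exactly `1` in one
coordinate and agree in the other. -/
def HalfGrid : SimpleGraph (ℤ × ℕ) := SimpleGraph.fromRel GridRel

abbrev NegInt : Type := {a : ℤ // a < 0}
abbrev NonnegInt : Type := {b : ℤ // 0 ≤ b}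

/-- Vertices of `G`: the half-grid vertices, plus for each `a < 0` four new vertices
(completing the `K₅` attached at `(a,0)`), plus for each `b ≥ 0` five new vertices
(completing the `K₃,₃` attached at `(b,0)`; the new vertices `0, 1` together with
`(b,0)` form the left side and the new vertices `2, 3, 4` form the right side). -/
abbrev GV : Type := (ℤ × ℕ) ⊕ ((NegInt × Fin 4) ⊕ (NonnegInt × Fin 5))

def GRel : GV → GV → Prop
  | Sum.inl p, Sum.inl q => GridRel p q
  | Sum.inl p, Sum.inr (Sum.inl w) => p = (w.1.1, 0)
  | Sum.inl p, Sum.inr (Sum.inr w) => p = (w.1.1, 0) ∧ 2 ≤ (w.2 : ℕ)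
  | Sum.inr (Sum.inl w), Sum.inr (Sum.inl w') => w.1 = w'.1
  | Sum.inr (Sum.inr w), Sum.inr (Sum.inr w') => w.1 = w'.1 ∧ (w.2 : ℕ) < 2 ∧ 2 ≤ (w'.2 : ℕ)
  | _, _ => False

/-- The graph `G`: the half-grid with a `K₅` attached at each `(a,0)`, `a < 0`, and a
`K₃,₃` attached at each `(b,0)`, `b ≥ 0`. -/
def GraphG : SimpleGraph GV := SimpleGraph.fromRel GRel

/-- The vertex set of the attached copy of `K₅` at `(a, 0)`. -/
def K5copy (a : NegInt) : Set GV :=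
  {Sum.inl (a.1, 0)} ∪ {x | ∃ i : Fin 4, x = Sum.inr (Sum.inl (a, i))}

/-- The vertex set of the attached copy of `K₃,₃` at `(b, 0)`. -/
def K33copy (b : NonnegInt) : Set GV :=
  {Sum.inl (b.1, 0)} ∪ {x | ∃ i : Fin 5, x = Sum.inr (Sum.inr (b, i))}

/-! Auxiliary constructions for statement6. -/

/-- Attachment point of the `K₅` used by model `k`. -/
def ak (k : ℕ) : NegInt := ⟨-(k+1), by omega⟩

/-- Attachment point of the `K₃,₃` used by model `k`. -/
def bk (k : ℕ) : NonnegInt := ⟨(k : ℤ), by omega⟩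

/-- x-coordinate of the U-shaped path for model `k`. -/
def px (k i : ℕ) : ℤ := if i ≤ k then -(k+1) else if i ≤ 3*k+1 then -(k+1) + (i - k : ℕ) else k

/-- y-coordinate of the U-shaped path for model `k`. -/
def py (k i : ℕ) : ℕ := if i ≤ k then i else if i ≤ 3*k+1 then k else 4*k+1 - i

def pf (k i : ℕ) : GV := Sum.inl (px k i, py k i)

def Pset (k : ℕ) : Set GV := pf k '' Set.Iic (4*k+1)

lemma px_zero (k : ℕ) : px k 0 = -(k+1) := by unfold px; split_ifs <;> omega
lemma py_zero (k : ℕ) : py k 0 = 0 := by unfold py; split_ifs <;> omega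
lemma px_last (k : ℕ) : px k (4*k+1) = k := by unfold px; split_ifs <;> omega
lemma py_last (k : ℕ) : py k (4*k+1) = 0 := by unfold py; split_ifs <;> omega

lemma path_step (k i : ℕ) (h : i < 4*k+1) :
    GridRel (px k i, py k i) (px k (i+1), py k (i+1)) ∨
    GridRel (px k (i+1), py k (i+1)) (px k i, py k i) := by
  unfold px py GridRel
  split_ifs <;> simp <;> omega

lemma path_bounds (k i : ℕ) :
    -(k+1 : ℤ) ≤ px k i ∧ px k i ≤ k ∧ py k i ≤ k ∧
      (py k i = k ∨ px k i = -(k+1) ∨ px k i = (k : ℤ)) := by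
  unfold px py
  split_ifs <;> refine ⟨by omega, by omega, by omega, by omega⟩

lemma start_mem (k : ℕ) : Sum.inl (-(k+1 : ℤ), 0) ∈ Pset k :=
  ⟨0, by simp, by simp [pf, px_zero, py_zero]⟩

lemma last_mem (k : ℕ) : Sum.inl ((k : ℤ), 0) ∈ Pset k :=
  ⟨4*k+1, by simp, by simp [pf, px_last, py_last]⟩

lemma inr_not_mem_Pset (k : ℕ) (x : (NegInt × Fin 4) ⊕ (NonnegInt × Fin 5)) :
    Sum.inr x ∉ Pset k := by
  rintro ⟨i, -, h⟩
  simp [pf] at h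

lemma mem_Pset_bounds {k : ℕ} {p : ℤ × ℕ} (h : Sum.inl p ∈ Pset k) :
    -(k+1 : ℤ) ≤ p.1 ∧ p.1 ≤ k ∧ p.2 ≤ k ∧
      (p.2 = k ∨ p.1 = -(k+1) ∨ p.1 = (k : ℤ)) := by
  obtain ⟨i, -, hpf⟩ := h
  have hb := path_bounds k i
  have hp : (px k i, py k i) = p := by
    simpa [pf, Sum.inl.injEq] using hpf
  rw [← hp]
  exact hb

lemma adjGG {x y : GV} (h1 : x ≠ y) (h2 : GRel x y) : GraphG.Adj x y := by
  rw [GraphG, SimpleGraph.fromRel_adj]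
  exact ⟨h1, Or.inl h2⟩

lemma pf_adj (k i : ℕ) (h : i < 4*k+1) : GraphG.Adj (pf k i) (pf k (i+1)) := by
  rw [GraphG, SimpleGraph.fromRel_adj]
  have step := path_step k i h
  constructor
  · intro heq
    have : px k i = px k (i+1) ∧ py k i = py k (i+1) := by
      simpa [pf, Prod.ext_iff] using heq
    unfold GridRel at step
    omega
  · exact step

lemma induce_chain_connected {β : Type*} (G : SimpleGraph β) (f : ℕ → β) (n : ℕ)
    (hadj : ∀ i < n, G.Adj (f i) (f (i+1))) :
    (G.induce (f '' Set.Iic n)).Connected := by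
  rw [SimpleGraph.connected_iff]
  have key : ∀ i, ∀ hi : i ≤ n, (G.induce (f '' Set.Iic n)).Reachable
      ⟨f i, ⟨i, by simpa using hi, rfl⟩⟩ ⟨f 0, ⟨0, by simp, rfl⟩⟩ := by
    intro i hi
    induction i with
    | zero => exact SimpleGraph.Reachable.refl _
    | succ j ih =>
      have hj : j ≤ n := by omega
      have h1 : (G.induce (f '' Set.Iic n)).Adj
          ⟨f (j+1), ⟨j+1, by simpa using hi, rfl⟩⟩ ⟨f j, ⟨j, by simpa using hj, rfl⟩⟩ := by
        simp only [SimpleGraph.comap_adj]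
        exact (hadj j (by omega)).symm
      exact h1.reachable.trans (ih hj)
  refine ⟨fun a b => ?_, ⟨⟨f 0, ⟨0, by simp, rfl⟩⟩⟩⟩
  obtain ⟨i, hi, hfi⟩ := a.2
  obtain ⟨j, hj, hfj⟩ := b.2
  simp only [Set.mem_Iic] at hi hj
  have ha : a = ⟨f i, ⟨i, by simpa using hi, rfl⟩⟩ := Subtype.ext hfi.symm
  have hb : b = ⟨f j, ⟨j, by simpa using hj, rfl⟩⟩ := Subtype.ext hfj.symm
  rw [ha, hb]
  exact (key i hi).trans (key j hj).symm

lemma induce_singleton_connected {β : Type*} (G : SimpleGraph β) (x : β) :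
    (G.induce {x}).Connected := by
  rw [SimpleGraph.connected_iff]
  refine ⟨fun a b => ?_, ⟨⟨x, rfl⟩⟩⟩
  have : a = b := Subtype.ext (by rw [a.2, b.2])
  rw [this]

/-- The branch sets of the `k`-th model. -/
def BI (k : ℕ) : IV → Set GV
  | Sum.inl i => if i = 0 then Pset k
      else {Sum.inr (Sum.inl (ak k, ⟨i.val - 1, by have := i.isLt; omega⟩))}
  | Sum.inr (Sum.inl j) => {Sum.inr (Sum.inr (bk k, ⟨j.val, by have := j.isLt; omega⟩))}
  | Sum.inr (Sum.inr j) => {Sum.inr (Sum.inr (bk k, ⟨j.val + 2, by have := j.isLt; omega⟩))}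

lemma grel_K5 (a : NegInt) (m m' : Fin 4) :
    GRel (Sum.inr (Sum.inl (a, m))) (Sum.inr (Sum.inl (a, m'))) := rfl

lemma grel_attach5 (a : NegInt) (m : Fin 4) :
    GRel (Sum.inl (a.1, 0)) (Sum.inr (Sum.inl (a, m))) := rfl

lemma grel_attach33 (b : NonnegInt) (m : Fin 5) (h : 2 ≤ (m : ℕ)) :
    GRel (Sum.inl (b.1, 0)) (Sum.inr (Sum.inr (b, m))) := ⟨rfl, h⟩

lemma grel_K33 (b : NonnegInt) (m m' : Fin 5) (h1 : (m : ℕ) < 2) (h2 : 2 ≤ (m' : ℕ)) :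
    GRel (Sum.inr (Sum.inr (b, m))) (Sum.inr (Sum.inr (b, m'))) := ⟨rfl, h1, h2⟩

/-- Which branch set of model `k` a vertex belongs to. -/
def tg : GV → IV
  | Sum.inl _ => Sum.inl 0
  | Sum.inr (Sum.inl w) => Sum.inl ⟨w.2.val + 1, by have := w.2.isLt; omega⟩
  | Sum.inr (Sum.inr w) =>
      if h : w.2.val < 2 then Sum.inr (Sum.inl ⟨w.2.val, h⟩)
      else Sum.inr (Sum.inr ⟨w.2.val - 2, by have := w.2.isLt; omega⟩)

lemma tg_of_mem {k : ℕ} {v : IV} {x : GV} (hx : x ∈ BI k v) : tg x = v := by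
  rcases v with i | (j | j)
  · by_cases hi : i = 0
    · subst hi
      simp only [BI, if_pos rfl] at hx
      obtain ⟨i', -, rfl⟩ := hx
      rfl
    · simp only [BI, if_neg hi, Set.mem_singleton_iff] at hx
      subst hx
      simp only [tg, Sum.inl.injEq]
      have h4 : 1 ≤ i.val := by
        rcases Nat.eq_zero_or_pos i.val with h0 | h1
        · exact absurd (Fin.ext (by simp [h0])) hi
        · exact h1
      exact Fin.ext (show i.val - 1 + 1 = i.val by omega)
  · simp only [BI, Set.mem_singleton_iff] at hx
    subst hx
    have hj := j.isLt
    simp only [tg]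
    rw [dif_pos (by simpa using hj)]
  · simp only [BI, Set.mem_singleton_iff] at hx
    subst hx
    simp only [tg]
    rw [dif_neg (by simp)]
    simp only [Sum.inr.injEq]
    exact Fin.ext (by simp)

lemma edge_of_IRel (k : ℕ) {v w : IV} (hne : v ≠ w) (h : IRel v w) :
    ∃ x ∈ BI k v, ∃ y ∈ BI k w, GraphG.Adj x y := by
  rcases v with i | (j | j) <;> rcases w with i' | (j' | j')
  · -- K5 edges
    by_cases hi : i = 0
    · subst hi
      have hi' : i' ≠ 0 := fun hh => hne (by rw [hh])
      refine ⟨Sum.inl (-(k+1 : ℤ), 0), ?_,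
        Sum.inr (Sum.inl (ak k, ⟨i'.val - 1, by have := i'.isLt; omega⟩)), ?_, ?_⟩
      · simpa [BI] using start_mem k
      · simp [BI, hi']
      · exact adjGG (by simp) (grel_attach5 (ak k) _)
    · by_cases hi' : i' = 0
      · subst hi'
        refine ⟨Sum.inr (Sum.inl (ak k, ⟨i.val - 1, by have := i.isLt; omega⟩)), ?_,
          Sum.inl (-(k+1 : ℤ), 0), ?_, ?_⟩
        · simp [BI, hi]
        · simpa [BI] using start_mem k
        · exact (adjGG (by simp) (grel_attach5 (ak k) _)).symm
      · refine ⟨Sum.inr (Sum.inl (ak k, ⟨i.val - 1, by have := i.isLt; omega⟩)), ?_,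
          Sum.inr (Sum.inl (ak k, ⟨i'.val - 1, by have := i'.isLt; omega⟩)), ?_, ?_⟩
        · simp [BI, hi]
        · simp [BI, hi']
        · refine adjGG ?_ (grel_K5 (ak k) _ _)
          simp only [ne_eq, Sum.inr.injEq, Sum.inl.injEq, Prod.mk.injEq, Fin.mk.injEq]
          rintro ⟨-, hval⟩
          have h2 : i ≠ i' := fun hh => hne (by rw [hh])
          have h3 : i.val ≠ i'.val := fun hh => h2 (Fin.ext hh)
          have := i.isLt; have := i'.isLt
          have h4 : i.val ≠ 0 := fun hh => hi (Fin.ext (by simpa using hh))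
          have h5 : i'.val ≠ 0 := fun hh => hi' (Fin.ext (by simpa using hh))
          omega
  · exact absurd h (by simp [IRel])
  · -- identified vertex to K33 right side
    have hi : i = 0 := h
    subst hi
    refine ⟨Sum.inl ((k : ℤ), 0), ?_,
      Sum.inr (Sum.inr (bk k, ⟨j'.val + 2, by have := j'.isLt; omega⟩)), ?_, ?_⟩
    · simpa [BI] using last_mem k
    · simp [BI]
    · exact adjGG (by simp) (grel_attach33 (bk k) _ (by simp))
  · exact absurd h (by simp [IRel])
  · exact absurd h (by simp [IRel])
  · -- K33 left to right
    refine ⟨Sum.inr (Sum.inr (bk k, ⟨j.val, by have := j.isLt; omega⟩)), ?_,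
      Sum.inr (Sum.inr (bk k, ⟨j'.val + 2, by have := j'.isLt; omega⟩)), ?_, ?_⟩
    · simp [BI]
    · simp [BI]
    · refine adjGG ?_ (grel_K33 (bk k) _ _ (by simpa using j.isLt) (by simp))
      simp only [ne_eq, Sum.inr.injEq, Prod.mk.injEq, Fin.mk.injEq]
      rintro ⟨-, hval⟩
      have := j.isLt
      omega
  · exact absurd h (by simp [IRel])
  · exact absurd h (by simp [IRel])
  · exact absurd h (by simp [IRel])

lemma mem_union_BI {k : ℕ} {x : GV} (hx : x ∈ ⋃ v, BI k v) :
    (∃ p : ℤ × ℕ, x = Sum.inl p ∧ Sum.inl p ∈ Pset k) ∨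
    (∃ m : Fin 4, x = Sum.inr (Sum.inl (ak k, m))) ∨
    (∃ m : Fin 5, x = Sum.inr (Sum.inr (bk k, m))) := by
  obtain ⟨s, ⟨v, rfl⟩, hxs⟩ := hx
  rcases v with i | (j | j)
  · by_cases hi : i = 0
    · subst hi
      simp only [BI, if_pos rfl] at hxs
      obtain ⟨i', hi', rfl⟩ := hxs
      exact Or.inl ⟨_, rfl, ⟨i', hi', rfl⟩⟩
    · simp only [BI, if_neg hi, Set.mem_singleton_iff] at hxs
      exact Or.inr (Or.inl ⟨_, hxs⟩)
  · simp only [BI, Set.mem_singleton_iff] at hxs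
    exact Or.inr (Or.inr ⟨_, hxs⟩)
  · simp only [BI, Set.mem_singleton_iff] at hxs
    exact Or.inr (Or.inr ⟨_, hxs⟩)

lemma model_k (k : ℕ) : IsMinorModel GraphI GraphG (BI k) := by
  constructor
  · -- nonempty
    rintro (i | (j | j))
    · by_cases hi : i = 0
      · subst hi; exact ⟨_, by simpa [BI] using start_mem k⟩
      · simp only [BI, if_neg hi]; exact Set.singleton_nonempty _
    · simp only [BI]; exact Set.singleton_nonempty _
    · simp only [BI]; exact Set.singleton_nonempty _
  · -- connected
    rintro (i | (j | j))
    · by_cases hi : i = 0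
      · subst hi
        have hB : BI k (Sum.inl 0) = pf k '' Set.Iic (4*k+1) := by simp [BI, Pset]
        rw [hB]
        exact induce_chain_connected GraphG (pf k) (4*k+1) (fun i hi => pf_adj k i hi)
      · rw [show BI k (Sum.inl i) = {(Sum.inr (Sum.inl (ak k,
            ⟨i.val - 1, by have := i.isLt; omega⟩)) : GV)} from by simp [BI, hi]]
        exact induce_singleton_connected _ _
    · simp only [BI]; exact induce_singleton_connected _ _
    · simp only [BI]; exact induce_singleton_connected _ _
  · -- pairwise disjoint
    intro v w hne
    rw [Set.disjoint_left]
    intro x hxv hxw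
    exact hne ((tg_of_mem hxv).symm.trans (tg_of_mem hxw))
  · -- adjacency
    intro v w hvw
    rw [GraphI, SimpleGraph.fromRel_adj] at hvw
    obtain ⟨hne, h | h⟩ := hvw
    · exact edge_of_IRel k hne h
    · obtain ⟨x, hx, y, hy, hxy⟩ := edge_of_IRel k hne.symm h
      exact ⟨y, hy, x, hx, hxy.symm⟩

/-- The graph `G` contains infinitely many pairwise vertex-disjoint
`I`-minors. -/
theorem statement6 :
    ∃ B : ℕ → IV → Set GV, DisjointModels GraphI GraphG B := by
  refine ⟨BI, fun k => model_k k, fun k l hkl => ?_⟩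
  rw [Set.disjoint_left]
  intro x hxk hxl
  rcases mem_union_BI hxk with ⟨p, rfl, hpk⟩ | ⟨m, rfl⟩ | ⟨m, rfl⟩ <;>
    rcases mem_union_BI hxl with ⟨q, heq, hql⟩ | ⟨m', heq⟩ | ⟨m', heq⟩
  · obtain rfl : p = q := by simpa using heq
    have hk := mem_Pset_bounds hpk
    have hl := mem_Pset_bounds hql
    omega
  · simp at heq
  · simp at heq
  · simp at heq
  · have hak : ak k = ak l := by
      simpa [Sum.inr.injEq, Sum.inl.injEq, Prod.mk.injEq] using (by
        simpa [Sum.inr.injEq, Sum.inl.injEq, Prod.ext_iff] using heq : ak k = ak l ∧ m = m').1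
    have hval : -(k+1 : ℤ) = -(l+1 : ℤ) := congrArg Subtype.val hak
    omega
  · simp at heq
  · simp at heq
  · simp at heq
  · have hbk : (k : ℤ) = (l : ℤ) := congrArg Subtype.val
      ((by simpa [Sum.inr.injEq, Prod.ext_iff] using heq : bk k = bk l ∧ m = m').1)
    omega
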